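/- Let R be a ring, 𝔓 a proper ideal, R' a flat R-algebra, and y_1,…,y_d elements of R' whose images form a possibly improper regular sequence on R'/𝔓R'. If 0 → M' → M → M'' → 0 is an exact sequence of R-modules with M'' being (R∖∖𝔓)-pseudoflat, then for every t ∈ ℕ the sequence 0 → M'⊗R'/(y_1^t,…,y_d^t)(M'⊗R') → M⊗R'/(y^t)(M⊗R') → M''⊗R'/(y^t)(M''⊗R') → 0 is exact, and the induced sequence 0 → H^d_{(y)}(M'⊗_R R') → H^d_{(y)}(M⊗_R R') → H^d_{(y)}(M''⊗_R R') → 0 of top local cohomology modules is exact. -/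

import Mathlib

/-!
STATEMENT 9.  `𝔓` a proper ideal of `R`, `R'` a flat `R`-algebra,
`y₁,…,y_d ∈ R'` whose images form a possibly improper (= weakly) regular
sequence on `R'/𝔓R'`.  If `0 → M' → M → M'' → 0` is exact with `M''`
`(R∖∖𝔓)`-pseudoflat, then for every `t` the sequence of quotients modulo
`(y₁ᵗ,…,y_dᵗ)` stays exact, and the induced sequence of top local cohomology
modules `0 → H^d_{(y)}(M'⊗R') → H^d_{(y)}(M⊗R') → H^d_{(y)}(M''⊗R') → 0` is
exact.  Here `H^d_{(y)}(N) = colim_t N/(y₁ᵗ,…,y_dᵗ)N`, the transition map from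
level `t` to level `t+s` being multiplication by `(y₁⋯y_d)^s`; exactness of the
colimit sequence is expressed element-wise: a class `[x; t]` vanishes iff
`(∏y)^s • x ∈ (y₁^{t+s},…,y_d^{t+s})N` for some `s`.
-/

open scoped TensorProduct

universe u

/-- `(R∖∖𝔓)`-pseudoflat. -/
def Pseudoflat {R : Type u} [CommRing R] (𝔓 : Ideal R)
    (N : Type u) [AddCommGroup N] [Module R N] : Prop :=
  ∀ (R' : Type u) [CommRing R'] [Algebra R R'], Module.Flat R R' →
    ∀ ys : List R',
      RingTheory.Sequence.IsWeaklyRegular (R' ⧸ 𝔓.map (algebraMap R R')) ys →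
      RingTheory.Sequence.IsWeaklyRegular (R' ⊗[R] N) ys

section AuxPseudoflat

open RingTheory.Sequence Submodule Function Pointwise

universe v

variable {A : Type v} [CommRing A]

private lemma aux_isWeaklyRegular_of_subsingleton {N : Type v} [AddCommGroup N] [Module A N]
    [Subsingleton N] (rs : List A) : IsWeaklyRegular N rs := by
  rw [isWeaklyRegular_iff]
  intro i hi
  haveI := (Submodule.mkQ_surjective
    (Ideal.ofList (rs.take i) • ⊤ : Submodule A N)).subsingleton
  exact fun a b _ => Subsingleton.elim a b

private lemma aux_exact_zero_left_of_inj {N' N : Type v} [AddCommGroup N'] [Module A N']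
    [AddCommGroup N] [Module A N] {f : N' →ₗ[A] N}
    (hf : Function.Injective f) :
    Function.Exact (0 : N' →ₗ[A] N') f := by
  intro y
  constructor
  · intro hy
    exact ⟨y, by simp [hf (show f y = f 0 by simpa using hy)]⟩
  · rintro ⟨x, rfl⟩
    simp

private lemma aux_injective_of_exact_zero_left {N' N : Type v} [AddCommGroup N'] [Module A N']
    [AddCommGroup N] [Module A N] {f : N' →ₗ[A] N}
    (h : Function.Exact (0 : N' →ₗ[A] N') f) :
    Function.Injective f := by
  rw [← LinearMap.ker_eq_bot, eq_bot_iff]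
  intro y hy
  obtain ⟨x, hx⟩ := (h y).mp hy
  simp only [LinearMap.zero_apply] at hx
  simp [← hx]

/-- An extension of modules with a weakly regular sequence on both ends has it too. -/
private lemma aux_isWeaklyRegular_of_exact (rs : List A) :
    ∀ {N' N N'' : Type v} [AddCommGroup N'] [Module A N']
      [AddCommGroup N] [Module A N] [AddCommGroup N''] [Module A N'']
      (f : N' →ₗ[A] N) (g : N →ₗ[A] N''),
      Function.Injective f → Function.Surjective g → Function.Exact f g →
      IsWeaklyRegular N' rs → IsWeaklyRegular N'' rs → IsWeaklyRegular N rs := by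
  induction rs with
  | nil => intros; exact .nil A _
  | cons r rs ih =>
    intro N' N N'' _ _ _ _ _ _ f g hf hg hfg h' h''
    rw [isWeaklyRegular_cons_iff] at h' h'' ⊢
    refine ⟨isSMulRegular_of_range_eq_ker hf hfg.linearMap_ker_eq.symm h'.1 h''.1, ?_⟩
    have hinj : Function.Injective (QuotSMulTop.map r f) := by
      have h4 := QuotSMulTop.map_first_exact_on_four_term_exact_of_isSMulRegular_last
        (aux_exact_zero_left_of_inj hf) hfg h''.1
      rw [map_zero] at h4
      exact aux_injective_of_exact_zero_left h4
    exact ih (QuotSMulTop.map r f) (QuotSMulTop.map r g) hinj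
      (QuotSMulTop.map_surjective r hg) (QuotSMulTop.map_exact r hfg hg) h'.2 h''.2

private lemma aux_mem_pointwise_smul_top {N : Type v} [AddCommGroup N] [Module A N]
    {z : A} {v : N} (hv : v ∈ (z • ⊤ : Submodule A N)) : ∃ m, z • m = v := by
  obtain ⟨m, -, hm⟩ := Set.mem_smul_set.mp hv
  exact ⟨m, hm⟩

private lemma aux_smul_mem_pointwise_smul_top {N : Type v} [AddCommGroup N] [Module A N]
    (z : A) (m : N) : z • m ∈ (z • ⊤ : Submodule A N) :=
  Submodule.smul_mem_pointwise_smul m z ⊤ mem_top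

private lemma aux_quotSMulTop_pow {N : Type v} [AddCommGroup N] [Module A N] {r : A}
    (hr : IsSMulRegular N r) (rs : List A)
    (h : IsWeaklyRegular (QuotSMulTop r N) rs) :
    ∀ t : ℕ, IsWeaklyRegular (QuotSMulTop (r ^ (t + 1)) N) rs := by
  intro t
  induction t with
  | zero => rw [pow_one]; exact h
  | succ t iht =>
    have hle₁ : (r • ⊤ : Submodule A N) ≤
        Submodule.comap (LinearMap.lsmul A N (r ^ (t + 1)))
          ((r ^ (t + 2)) • ⊤ : Submodule A N) := by
      intro x hx
      obtain ⟨y, hy⟩ := aux_mem_pointwise_smul_top hx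
      simp only [Submodule.mem_comap, LinearMap.lsmul_apply]
      have hxy : (r ^ (t + 1)) • x = (r ^ (t + 2)) • y := by
        rw [← hy, smul_smul, ← pow_succ]
      rw [hxy]
      exact aux_smul_mem_pointwise_smul_top _ _
    have hle₂ : ((r ^ (t + 2)) • ⊤ : Submodule A N) ≤
        Submodule.comap (LinearMap.id (M := N)) ((r ^ (t + 1)) • ⊤ : Submodule A N) := by
      intro x hx
      obtain ⟨y, hy⟩ := aux_mem_pointwise_smul_top hx
      simp only [Submodule.mem_comap, LinearMap.id_coe, id_eq]
      have hxy : (r : A) ^ (t + 2) • y = r ^ (t + 1) • (r • y) := by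
        rw [pow_succ, mul_smul]
      rw [← hy, hxy]
      exact aux_smul_mem_pointwise_smul_top _ _
    set f : QuotSMulTop r N →ₗ[A] QuotSMulTop (r ^ (t + 2)) N :=
      Submodule.mapQ _ _ (LinearMap.lsmul A N (r ^ (t + 1))) hle₁ with hfdef
    set g : QuotSMulTop (r ^ (t + 2)) N →ₗ[A] QuotSMulTop (r ^ (t + 1)) N :=
      Submodule.mapQ _ _ LinearMap.id hle₂ with hgdef
    have hfmk : ∀ x : N, f (Submodule.Quotient.mk x) =
        Submodule.Quotient.mk ((r ^ (t + 1)) • x) := fun x => rfl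
    have hgmk : ∀ x : N, g (Submodule.Quotient.mk x) = Submodule.Quotient.mk x :=
      fun x => rfl
    have hf : Function.Injective f := by
      rw [← LinearMap.ker_eq_bot, eq_bot_iff]
      intro q hq
      obtain ⟨x, rfl⟩ := Submodule.Quotient.mk_surjective _ q
      rw [LinearMap.mem_ker, hfmk, Submodule.Quotient.mk_eq_zero] at hq
      obtain ⟨y, hy⟩ := aux_mem_pointwise_smul_top hq
      have h5 : (r ^ (t + 1)) • (r • y) = (r ^ (t + 1)) • x := by
        rw [smul_smul, ← pow_succ, hy]
      have hx : r • y = x := hr.pow (t + 1) h5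
      rw [Submodule.mem_bot, Submodule.Quotient.mk_eq_zero, ← hx]
      exact aux_smul_mem_pointwise_smul_top _ _
    have hg : Function.Surjective g := by
      intro q
      obtain ⟨x, rfl⟩ := Submodule.Quotient.mk_surjective _ q
      exact ⟨Submodule.Quotient.mk x, hgmk x⟩
    have hfg : Function.Exact f g := by
      intro q
      obtain ⟨x, rfl⟩ := Submodule.Quotient.mk_surjective _ q
      constructor
      · intro hq
        rw [hgmk, Submodule.Quotient.mk_eq_zero] at hq
        obtain ⟨y, hy⟩ := aux_mem_pointwise_smul_top hq
        exact ⟨Submodule.Quotient.mk y, by rw [hfmk, hy]⟩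
      · rintro ⟨q', hq'⟩
        obtain ⟨y, rfl⟩ := Submodule.Quotient.mk_surjective _ q'
        rw [hfmk] at hq'
        have h6 : (r ^ (t + 1)) • y - x ∈ ((r ^ (t + 1)) • ⊤ : Submodule A N) :=
          hle₂ ((Submodule.Quotient.eq _).mp hq')
        rw [hgmk, Submodule.Quotient.mk_eq_zero]
        have hx : x = (r ^ (t + 1)) • y - ((r ^ (t + 1)) • y - x) := by abel
        rw [hx]
        exact sub_mem (aux_smul_mem_pointwise_smul_top _ _) h6
    exact aux_isWeaklyRegular_of_exact rs f g hf hg hfg h iht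

/-- Powers of a weakly regular sequence are weakly regular. -/
private lemma aux_isWeaklyRegular_list_pow (rs : List A) :
    ∀ {N : Type v} [AddCommGroup N] [Module A N],
      IsWeaklyRegular N rs → ∀ t : ℕ, IsWeaklyRegular N (rs.map (· ^ t)) := by
  induction rs with
  | nil => intro N _ _ _ t; simpa using IsWeaklyRegular.nil A N
  | cons r rs ih =>
    intro N _ _ h t
    rw [isWeaklyRegular_cons_iff] at h
    rw [List.map_cons, isWeaklyRegular_cons_iff]
    refine ⟨h.1.pow t, ?_⟩
    rcases t with _ | t
    · haveI : Subsingleton (QuotSMulTop ((r : A) ^ 0) N) := by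
        rw [Submodule.Quotient.subsingleton_iff, pow_zero, one_smul]
      exact aux_isWeaklyRegular_of_subsingleton _
    · exact aux_quotSMulTop_pow h.1 _ (ih h.2 (t + 1)) t

/-- If a sequence is weakly regular on the cokernel, the kernel of the induced
map on quotients is trivial. -/
private lemma aux_mem_smul_top_of_map_mem_smul_top
    {N' N N'' : Type v} [AddCommGroup N'] [Module A N']
    [AddCommGroup N] [Module A N] [AddCommGroup N''] [Module A N'']
    (f : N' →ₗ[A] N) (g : N →ₗ[A] N'')
    (hf : Function.Injective f) (hg : Function.Surjective g)
    (hfg : Function.Exact f g) (zs : List A)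
    (h : IsWeaklyRegular N'' zs) :
    ∀ x' : N', f x' ∈ Ideal.ofList zs • (⊤ : Submodule A N) →
      x' ∈ Ideal.ofList zs • (⊤ : Submodule A N') := by
  induction zs using List.reverseRecOn with
  | nil =>
    intro x' hx'
    rw [Ideal.ofList_nil, bot_smul, Submodule.mem_bot] at hx' ⊢
    exact hf (hx'.trans (map_zero f).symm)
  | append_singleton l z ih =>
    intro x' hx'
    rw [isWeaklyRegular_append_iff] at h
    have hz : IsSMulRegular (N'' ⧸ (Ideal.ofList l • ⊤ : Submodule A N'')) z :=
      (isWeaklyRegular_singleton_iff _ _).mp h.2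
    have hsplit : ∀ (P : Type v) [AddCommGroup P] [Module A P],
        Ideal.ofList (l ++ [z]) • (⊤ : Submodule A P) =
          Ideal.ofList l • ⊤ ⊔ z • ⊤ := by
      intro P _ _
      rw [Ideal.ofList_append, sup_smul, Ideal.ofList_singleton,
        Submodule.ideal_span_singleton_smul]
    rw [hsplit] at hx'
    obtain ⟨u, hu, v, hv, huv⟩ := Submodule.mem_sup.mp hx'
    obtain ⟨m, hm⟩ : ∃ m, z • m = v := by
      obtain ⟨m, -, hm⟩ := Set.mem_smul_set.mp hv; exact ⟨m, hm⟩
    have hgu : g u ∈ Ideal.ofList l • (⊤ : Submodule A N'') :=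
      smul_top_le_comap_smul_top _ g hu
    have hzgm : z • g m ∈ Ideal.ofList l • (⊤ : Submodule A N'') := by
      have h7 : z • g m = - g u := by
        have h8 : g u + g v = 0 := by
          rw [← map_add, huv, hfg.apply_apply_eq_zero]
        rw [← hm, map_smul] at h8
        exact eq_neg_of_add_eq_zero_right h8
      rw [h7]; exact neg_mem hgu
    have hgm : g m ∈ Ideal.ofList l • (⊤ : Submodule A N'') :=
      mem_of_isSMulRegular_quotient_of_smul_mem hz hzgm
    have hmap : g m ∈ Submodule.map g (Ideal.ofList l • (⊤ : Submodule A N)) := by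
      rw [Submodule.map_smul'', Submodule.map_top, LinearMap.range_eq_top.mpr hg]
      exact hgm
    obtain ⟨w, hw, hgw⟩ := hmap
    obtain ⟨u', hu'⟩ := (hfg (m - w)).mp (by rw [map_sub, hgw, sub_self])
    have key : f (x' - z • u') = u + z • w := by
      rw [map_sub, map_smul, hu', smul_sub, ← huv, ← hm]
      abel
    have hmem : f (x' - z • u') ∈ Ideal.ofList l • (⊤ : Submodule A N) := by
      rw [key]
      exact add_mem hu (Submodule.smul_mem _ z hw)
    have h1 := ih h.1 _ hmem
    rw [hsplit]
    have h2 : z • u' ∈ (z • ⊤ : Submodule A N') :=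
      Submodule.smul_mem_pointwise_smul u' z ⊤ mem_top
    have h3 := add_mem (Submodule.mem_sup_left h1) (Submodule.mem_sup_right h2)
    simpa using h3

end AuxPseudoflat

theorem pseudoflat_quotients_and_top_localCohomology_exact
    {R : Type u} [CommRing R] (𝔓 : Ideal R) (h𝔓 : 𝔓 ≠ ⊤)
    (R' : Type u) [CommRing R'] [Algebra R R'] [Module.Flat R R']
    (d : ℕ) (y : Fin d → R')
    (hy : RingTheory.Sequence.IsWeaklyRegular
      (R' ⧸ 𝔓.map (algebraMap R R')) (List.ofFn y))
    (M' M M'' : Type u)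
    [AddCommGroup M'] [Module R M'] [AddCommGroup M] [Module R M]
    [AddCommGroup M''] [Module R M'']
    (f : M' →ₗ[R] M) (g : M →ₗ[R] M'')
    (hf : Function.Injective f) (hg : Function.Surjective g)
    (hfg : Function.Exact f g)
    (hM'' : Pseudoflat 𝔓 M'') :
    -- notation: `J t` is the ideal `(y₁ᵗ,…,y_dᵗ)`, `c = y₁⋯y_d`,
    -- `f' = f ⊗ R'`, `g' = g ⊗ R'`
    (let J : ℕ → Ideal R' := fun t => Ideal.span (Set.range fun i => y i ^ t)
     let f' := LinearMap.baseChange R' f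
     let g' := LinearMap.baseChange R' g
     let c : R' := ∏ i, y i
     -- (∗_t): exactness of 0 → M'⊗R'/(yᵗ) → M⊗R'/(yᵗ) → M''⊗R'/(yᵗ) → 0
     (∀ t : ℕ,
       (∀ x' : R' ⊗[R] M',
          f' x' ∈ J t • (⊤ : Submodule R' (R' ⊗[R] M)) →
          x' ∈ J t • (⊤ : Submodule R' (R' ⊗[R] M'))) ∧
       (∀ x : R' ⊗[R] M,
          g' x ∈ J t • (⊤ : Submodule R' (R' ⊗[R] M'')) →
          ∃ x' : R' ⊗[R] M', x - f' x' ∈ J t • (⊤ : Submodule R' (R' ⊗[R] M))) ∧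
       (∀ x'' : R' ⊗[R] M'', ∃ x : R' ⊗[R] M,
          g' x - x'' ∈ J t • (⊤ : Submodule R' (R' ⊗[R] M'')))) ∧
     -- (∗∗): exactness of 0 → H^d_{(y)}(M'⊗R') → H^d_{(y)}(M⊗R') → H^d_{(y)}(M''⊗R') → 0,
     -- expressed element-wise in the colimit description of H^d
     (∀ (t : ℕ) (x' : R' ⊗[R] M'),
        (∃ s : ℕ, (c ^ s) • f' x' ∈ J (t + s) • (⊤ : Submodule R' (R' ⊗[R] M))) →
        (∃ s : ℕ, (c ^ s) • x' ∈ J (t + s) • (⊤ : Submodule R' (R' ⊗[R] M')))) ∧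
     (∀ (t : ℕ) (x : R' ⊗[R] M),
        (∃ s : ℕ, (c ^ s) • g' x ∈ J (t + s) • (⊤ : Submodule R' (R' ⊗[R] M''))) →
        (∃ (s : ℕ) (x' : R' ⊗[R] M'),
          (c ^ s) • x - f' x' ∈ J (t + s) • (⊤ : Submodule R' (R' ⊗[R] M)))) ∧
     (∀ (t : ℕ) (x'' : R' ⊗[R] M''), ∃ (s : ℕ) (x : R' ⊗[R] M),
        g' x - (c ^ s) • x'' ∈ J (t + s) • (⊤ : Submodule R' (R' ⊗[R] M'')))) := by
  have hf' : Function.Injective (LinearMap.baseChange R' f) := by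
    rw [show ⇑(LinearMap.baseChange R' f) = ⇑(f.lTensor R') from
      LinearMap.baseChange_eq_ltensor f]
    exact Module.Flat.lTensor_preserves_injective_linearMap f hf
  have hg' : Function.Surjective (LinearMap.baseChange R' g) := by
    rw [show ⇑(LinearMap.baseChange R' g) = ⇑(g.lTensor R') from
      LinearMap.baseChange_eq_ltensor g]
    exact LinearMap.lTensor_surjective R' hg
  have hfg' : Function.Exact (LinearMap.baseChange R' f) (LinearMap.baseChange R' g) := by
    rw [show ⇑(LinearMap.baseChange R' f) = ⇑(f.lTensor R') from
      LinearMap.baseChange_eq_ltensor f,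
      show ⇑(LinearMap.baseChange R' g) = ⇑(g.lTensor R') from
      LinearMap.baseChange_eq_ltensor g]
    exact lTensor_exact R' hfg hg
  have hwr : ∀ t : ℕ, RingTheory.Sequence.IsWeaklyRegular (R' ⊗[R] M'') (List.ofFn fun i => y i ^ t) := by
    intro t
    have h1 := aux_isWeaklyRegular_list_pow (List.ofFn y) hy t
    rw [List.map_ofFn] at h1
    exact hM'' R' inferInstance _ h1
  have hJ : ∀ t : ℕ, Ideal.span (Set.range fun i => y i ^ t) =
      Ideal.ofList (List.ofFn fun i => y i ^ t) := by
    intro t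
    exact congrArg Ideal.span (Set.ext fun a => (List.mem_ofFn' _ a).symm)
  have star1 : ∀ (t : ℕ) (x' : R' ⊗[R] M'),
      LinearMap.baseChange R' f x' ∈
        Ideal.span (Set.range fun i => y i ^ t) • (⊤ : Submodule R' (R' ⊗[R] M)) →
      x' ∈ Ideal.span (Set.range fun i => y i ^ t) •
        (⊤ : Submodule R' (R' ⊗[R] M')) := by
    intro t x' hx
    rw [hJ] at hx ⊢
    exact aux_mem_smul_top_of_map_mem_smul_top _ _ hf' hg' hfg' _ (hwr t) x' hx
  have star2 : ∀ (t : ℕ) (x : R' ⊗[R] M),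
      LinearMap.baseChange R' g x ∈
        Ideal.span (Set.range fun i => y i ^ t) • (⊤ : Submodule R' (R' ⊗[R] M'')) →
      ∃ x' : R' ⊗[R] M', x - LinearMap.baseChange R' f x' ∈
        Ideal.span (Set.range fun i => y i ^ t) • (⊤ : Submodule R' (R' ⊗[R] M)) := by
    intro t x hx
    have hmap : LinearMap.baseChange R' g x ∈ Submodule.map (LinearMap.baseChange R' g)
        (Ideal.span (Set.range fun i => y i ^ t) • (⊤ : Submodule R' (R' ⊗[R] M))) := by
      rw [Submodule.map_smul'', Submodule.map_top, LinearMap.range_eq_top.mpr hg']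
      exact hx
    obtain ⟨w, hw, hgw⟩ := hmap
    obtain ⟨x', hx'⟩ := (hfg' (x - w)).mp (by rw [map_sub, hgw, sub_self])
    refine ⟨x', ?_⟩
    have hxw : x - LinearMap.baseChange R' f x' = w := by rw [hx']; abel
    rw [hxw]
    exact hw
  have star3 : ∀ (t : ℕ) (x'' : R' ⊗[R] M''), ∃ x : R' ⊗[R] M,
      LinearMap.baseChange R' g x - x'' ∈
        Ideal.span (Set.range fun i => y i ^ t) •
          (⊤ : Submodule R' (R' ⊗[R] M'')) := by
    intro t x''
    obtain ⟨x, hx⟩ := hg' x''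
    exact ⟨x, by rw [hx, sub_self]; exact zero_mem _⟩
  refine ⟨fun t => ⟨star1 t, star2 t, star3 t⟩, ?_, ?_, ?_⟩
  · rintro t x' ⟨s, hs⟩
    refine ⟨s, star1 (t + s) _ ?_⟩
    rw [map_smul]
    exact hs
  · rintro t x ⟨s, hs⟩
    obtain ⟨x', hx'⟩ := star2 (t + s) (((∏ i, y i) ^ s) • x) (by rw [map_smul]; exact hs)
    exact ⟨s, x', hx'⟩
  · intro t x''
    obtain ⟨x, hx⟩ := hg' x''
    refine ⟨0, x, ?_⟩
    rw [hx, pow_zero, one_smul, sub_self]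
    exact zero_mem _
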